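/- Let E be the (0,1,−1) matrix E = [[J_{k₁,k₂}, −J_{k₁,k₂}, 0],[−J_{k₁,k₂}, J_{k₁,k₂}, 0],[0,0,0]] of rank 1 (with k₁, k₂ > 0), and let A = [[0, J_{k₁,k₂}, X₁],[J_{k₁,k₂}, 0, X₂],[X₃, X₄, Y]] be a (0,1) matrix conformally partitioned with E. Then A and A+E are Gram mates if and only if 𝟙ᵀX₁ = 𝟙ᵀX₂ and X₃𝟙 = X₄𝟙. -/

import Mathlib

open Matrix

theorem stmt12 (k₁ k₂ p q : ℕ) (hk₁ : 0 < k₁) (hk₂ : 0 < k₂)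
    (X₁ X₂ : Matrix (Fin k₁) (Fin q) ℝ)
    (X₃ X₄ : Matrix (Fin p) (Fin k₂) ℝ)
    (Y : Matrix (Fin p) (Fin q) ℝ) :
    let J : Matrix (Fin k₁) (Fin k₂) ℝ := Matrix.of fun _ _ => 1
    let E : Matrix (Fin k₁ ⊕ (Fin k₁ ⊕ Fin p)) (Fin k₂ ⊕ (Fin k₂ ⊕ Fin q)) ℝ :=
      Matrix.fromBlocks J (Matrix.fromCols (-J) 0) (Matrix.fromRows (-J) 0)
        (Matrix.fromBlocks J 0 0 0)
    let A : Matrix (Fin k₁ ⊕ (Fin k₁ ⊕ Fin p)) (Fin k₂ ⊕ (Fin k₂ ⊕ Fin q)) ℝ :=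
      Matrix.fromBlocks 0 (Matrix.fromCols J X₁) (Matrix.fromRows J X₃)
        (Matrix.fromBlocks 0 X₂ X₄ Y)
    (∀ i j, A i j = 0 ∨ A i j = 1) →
    ((A * Aᵀ = (A + E) * (A + E)ᵀ ∧ Aᵀ * A = (A + E)ᵀ * (A + E) ∧ A ≠ A + E) ↔
      ((fun _ => 1) ᵥ* X₁ = (fun _ => 1) ᵥ* X₂ ∧
        X₃ *ᵥ (fun _ => 1) = X₄ *ᵥ (fun _ => 1))) := by
  intro J E A _
  constructor
  · rintro ⟨h1, h2, -⟩
    constructor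
    · funext a
      have := congrFun (congrFun h2 (Sum.inr (Sum.inr a))) (Sum.inl ⟨0, hk₂⟩)
      simp [A, E, J, Matrix.mul_apply, Fintype.sum_sum_type, Matrix.vecMul,
        dotProduct] at this ⊢
      linarith
    · funext i
      have := congrFun (congrFun h1 (Sum.inr (Sum.inr i))) (Sum.inl ⟨0, hk₁⟩)
      simp [A, E, J, Matrix.mul_apply, Fintype.sum_sum_type, Matrix.mulVec,
        dotProduct] at this ⊢
      linarith
  · rintro ⟨hc, hr⟩
    have hc' : ∀ a, ∑ x : Fin k₁, X₁ x a = ∑ x : Fin k₁, X₂ x a := by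
      intro a
      have := congrFun hc a
      simpa [Matrix.vecMul, dotProduct] using this
    have hr' : ∀ i, ∑ x : Fin k₂, X₃ i x = ∑ x : Fin k₂, X₄ i x := by
      intro i
      have := congrFun hr i
      simpa [Matrix.mulVec, dotProduct] using this
    refine ⟨?_, ?_, ?_⟩
    · ext r c
      rcases r with i | i | i <;> rcases c with j | j | j <;>
        simp [A, E, J, Matrix.mul_apply, Fintype.sum_sum_type, Finset.sum_add_distrib,
          mul_add, add_mul] <;>
        first | ring1 | linarith [hr' i] | linarith [hr' j]
    · ext r c
      rcases r with i | i | i <;> rcases c with j | j | j <;>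
        simp [A, E, J, Matrix.mul_apply, Fintype.sum_sum_type, Finset.sum_add_distrib,
          mul_add, add_mul] <;>
        first | ring1 | linarith [hc' i] | linarith [hc' j]
    · intro h
      have := congrFun (congrFun h (Sum.inl ⟨0, hk₁⟩)) (Sum.inl ⟨0, hk₂⟩)
      simp [A, E, J] at this
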